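/- For λ > 1 and x in the open unit disk D ⊆ ℝ^n, the point f(x, λ) = (4λx + (1+|x|²)(λ²−1)e₀) / ((1+λ)² + (1−λ)²|x|²) lies in the open upper half unit ball: |f(x,λ)| < 1 and ⟨f(x,λ), e₀⟩ > 0. -/

import Mathlib

open Real RealInnerProductSpace

/-- The Moebius coordinate map
`f(x,λ) = (4λx + (1+|x|²)(λ²−1)e₀) / ((1+λ)² + (1−λ)²|x|²)`. -/
noncomputable def moebius {n : ℕ} (e₀ : EuclideanSpace ℝ (Fin (n + 1)))
    (x : EuclideanSpace ℝ (Fin (n + 1))) (l : ℝ) : EuclideanSpace ℝ (Fin (n + 1)) :=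
  ((1 + l) ^ 2 + (1 - l) ^ 2 * ‖x‖ ^ 2)⁻¹ • ((4 * l) • x + ((1 + ‖x‖ ^ 2) * (l ^ 2 - 1)) • e₀)

/-- For `λ > 1` and `x` in the open unit disk, the Moebius map lands in the open upper
half unit ball. -/
theorem moebius_interior_to_open_half_ball {n : ℕ}
    (e₀ x : EuclideanSpace ℝ (Fin (n + 1))) (he₀ : ‖e₀‖ = 1)
    (hx_perp : ⟪x, e₀⟫ = 0) (hx : ‖x‖ < 1) (l : ℝ) (hl : 1 < l) :
    ‖moebius e₀ x l‖ < 1 ∧ 0 < ⟪moebius e₀ x l, e₀⟫ := by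
  set r : ℝ := ‖x‖ with hr
  have hr0 : 0 ≤ r := norm_nonneg x
  have hD : 0 < (1 + l) ^ 2 + (1 - l) ^ 2 * r ^ 2 := by nlinarith [sq_nonneg (1 - l), sq_nonneg r]
  set D : ℝ := (1 + l) ^ 2 + (1 - l) ^ 2 * r ^ 2 with hDdef
  have hee : ⟪e₀, e₀⟫ = 1 := by
    rw [real_inner_self_eq_norm_sq, he₀]; norm_num
  have hinner : ⟪moebius e₀ x l, e₀⟫ = D⁻¹ * ((1 + r ^ 2) * (l ^ 2 - 1)) := by
    unfold moebius
    rw [real_inner_smul_left, inner_add_left, real_inner_smul_left, real_inner_smul_left,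
      hx_perp, hee]
    rw [← hr, ← hDdef]
    ring_nf
  have hinner_pos : 0 < ⟪moebius e₀ x l, e₀⟫ := by
    rw [hinner]
    have h1 : 0 < (1 + r ^ 2) * (l ^ 2 - 1) := by nlinarith
    exact mul_pos (inv_pos.mpr hD) h1
  refine ⟨?_, hinner_pos⟩
  have hxe : ⟪(4 * l) • x, ((1 + r ^ 2) * (l ^ 2 - 1)) • e₀⟫ = 0 := by
    rw [real_inner_smul_left, real_inner_smul_right, hx_perp]; ring
  have hnsq : ‖moebius e₀ x l‖ ^ 2 =
      D⁻¹ ^ 2 * ((4 * l) ^ 2 * r ^ 2 + ((1 + r ^ 2) * (l ^ 2 - 1)) ^ 2) := by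
    unfold moebius
    rw [norm_smul, mul_pow, @norm_add_sq_real, hxe, norm_smul, norm_smul, he₀]
    rw [Real.norm_eq_abs, Real.norm_eq_abs, Real.norm_eq_abs, sq_abs]
    rw [mul_pow, mul_pow, sq_abs, sq_abs]
    ring
  have hkey : (4 * l) ^ 2 * r ^ 2 + ((1 + r ^ 2) * (l ^ 2 - 1)) ^ 2 < D ^ 2 := by
    have hfac : D ^ 2 - ((4 * l) ^ 2 * r ^ 2 + ((1 + r ^ 2) * (l ^ 2 - 1)) ^ 2)
        = 4 * l * (1 - r ^ 2) * ((1 - l) ^ 2 * r ^ 2 + (1 + l) ^ 2) := by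
      rw [hDdef]; ring
    have hpos : 0 < 4 * l * (1 - r ^ 2) * ((1 - l) ^ 2 * r ^ 2 + (1 + l) ^ 2) :=
      mul_pos (mul_pos (by nlinarith : (0:ℝ) < 4 * l) (by nlinarith : (0:ℝ) < 1 - r ^ 2))
        (by nlinarith [sq_nonneg ((1 - l) * r)] : (0:ℝ) < (1 - l) ^ 2 * r ^ 2 + (1 + l) ^ 2)
    linarith [hfac]
  have hlt1 : ‖moebius e₀ x l‖ ^ 2 < 1 := by
    rw [hnsq]
    rw [inv_pow]
    rw [inv_mul_lt_one₀ (by positivity)]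
    linarith [hkey]
  exact lt_of_pow_lt_pow_left₀ 2 zero_le_one (by simpa using hlt1)
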